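/- On ℂ^m with symplectic form ω = (i/2) ∑_j a_j^{-1} dw_j ∧ d conj(w_j) (a_j ∈ ℝ nonzero), the functions p_j = a_m |w_j|² − a_j |w_m|² for j = 1,…,m−1 and p_m = Im(w_1 ⋯ w_m) pairwise Poisson-commute: {p_i, p_j} = 0 for all i, j. -/

import Mathlib

open Complex Finset

lemma keyNormSq {m : ℕ} (k : Fin m) (w : Fin m → ℂ) :
    HasFDerivAt (fun w : Fin m → ℂ => ‖w k‖^2)
      ((2*(w k).re) • (Complex.reCLM.comp (ContinuousLinearMap.proj k)) +
        (2*(w k).im) • (Complex.imCLM.comp (ContinuousLinearMap.proj k))) w := by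
  have h1 : HasFDerivAt (fun w : Fin m → ℂ => (w k).re)
      (Complex.reCLM.comp (ContinuousLinearMap.proj (R := ℝ) (φ := fun _ : Fin m => ℂ) k)) w :=
    (Complex.reCLM.hasFDerivAt).comp w (hasFDerivAt_apply k w)
  have h2 : HasFDerivAt (fun w : Fin m → ℂ => (w k).im)
      (Complex.imCLM.comp (ContinuousLinearMap.proj (R := ℝ) (φ := fun _ : Fin m => ℂ) k)) w :=
    (Complex.imCLM.hasFDerivAt).comp w (hasFDerivAt_apply k w)
  have h := ((h1.mul h1).add (h2.mul h2))
  have heq : (fun w : Fin m → ℂ => ‖w k‖^2)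
      = fun w : Fin m → ℂ => (w k).re * (w k).re + (w k).im * (w k).im := by
    funext w
    rw [Complex.sq_norm, Complex.normSq_apply]
  rw [heq]
  refine h.congr_fderiv ?_
  ext v
  simp
  ring

lemma keyProd {m : ℕ} (w v : Fin m → ℂ) :
    fderiv ℝ (fun w : Fin m → ℂ => (∏ j, w j).im) w v =
      ∑ j, ((∏ l ∈ univ.erase j, w l) * v j).im := by
  have hp : HasFDerivAt (fun w : Fin m → ℂ => ∏ j, w j)
      (∑ i : Fin m, (∏ j ∈ univ.erase i, w j) • ContinuousLinearMap.proj i) w :=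
    hasFDerivAt_finset_prod (𝕜 := ℝ)
  have h : HasFDerivAt (fun w : Fin m → ℂ => (∏ j, w j).im)
      (Complex.imCLM.comp (∑ i : Fin m, (∏ j ∈ univ.erase i, w j) • ContinuousLinearMap.proj i)) w :=
    (Complex.imCLM.hasFDerivAt).comp w hp
  rw [h.fderiv]
  simp [mul_comm]

theorem stmt17 {m : ℕ} (hm : 0 < m) (a : Fin m → ℝ) (ha : ∀ j, a j ≠ 0)
    (p : Fin m → (Fin m → ℂ) → ℝ)
    (hpj : ∀ i : Fin m, i.val < m - 1 → ∀ w : Fin m → ℂ,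
      p i w = a ⟨m - 1, by omega⟩ * ‖w i‖ ^ 2 - a i * ‖w ⟨m - 1, by omega⟩‖ ^ 2)
    (hpm : ∀ w : Fin m → ℂ, p ⟨m - 1, by omega⟩ w = (∏ j, w j).im) :
    ∀ (i j : Fin m) (w : Fin m → ℂ),
      ∑ k, a k *
        ((fderiv ℝ (p i) w (Pi.single k Complex.I)) * (fderiv ℝ (p j) w (Pi.single k 1))
          - (fderiv ℝ (p i) w (Pi.single k 1)) * (fderiv ℝ (p j) w (Pi.single k Complex.I)))
        = 0 := by
  intro i j w
  set M : Fin m := ⟨m - 1, by omega⟩ with hM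
  have dsmall : ∀ (i : Fin m), i.val < m - 1 → ∀ (k : Fin m) (c : ℂ),
      fderiv ℝ (p i) w (Pi.single k c)
        = (if i = k then a M * (2*((w i).re*c.re + (w i).im*c.im)) else 0)
          - (if M = k then a i * (2*((w M).re*c.re + (w M).im*c.im)) else 0) := by
    intro i hi k c
    have hfe : p i = fun w : Fin m → ℂ => a M * ‖w i‖^2 - a i * ‖w M‖^2 :=
      funext fun w => hpj i hi w
    have hd : HasFDerivAt (p i)
        (a M • ((2*(w i).re) • (Complex.reCLM.comp (ContinuousLinearMap.proj i)) +
          (2*(w i).im) • (Complex.imCLM.comp (ContinuousLinearMap.proj i)))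
         - a i • ((2*(w M).re) • (Complex.reCLM.comp (ContinuousLinearMap.proj M)) +
          (2*(w M).im) • (Complex.imCLM.comp (ContinuousLinearMap.proj M)))) w := by
      rw [hfe]
      exact ((keyNormSq i w).const_smul (a M)).sub ((keyNormSq M w).const_smul (a i))
    rw [hd.fderiv]
    by_cases h1 : i = k <;> by_cases h2 : M = k <;>
      simp [h1, h2, Pi.single_apply, Pi.single_eq_of_ne, smul_eq_mul] <;> ring
  have dbig : ∀ (k : Fin m) (c : ℂ), fderiv ℝ (p M) w (Pi.single k c)
      = ((∏ l ∈ univ.erase k, w l) * c).im := by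
    intro k c
    have hfe : p M = fun w : Fin m → ℂ => (∏ j, w j).im := funext hpm
    rw [hfe, keyProd, Finset.sum_eq_single k]
    · simp
    · intro b _ hb
      simp [Pi.single_eq_of_ne hb]
    · simp
  have mixed : ∀ (i : Fin m), i.val < m - 1 →
      ∑ k, a k * ((fderiv ℝ (p i) w (Pi.single k Complex.I)) * (fderiv ℝ (p M) w (Pi.single k 1))
        - (fderiv ℝ (p i) w (Pi.single k 1)) * (fderiv ℝ (p M) w (Pi.single k Complex.I))) = 0 := by
    intro i hi
    have hiM : i ≠ M := by
      intro h
      rw [h] at hi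
      simp [hM] at hi
    have hterm : ∀ k ∈ (univ : Finset (Fin m)),
        a k * ((fderiv ℝ (p i) w (Pi.single k Complex.I)) * (fderiv ℝ (p M) w (Pi.single k 1))
          - (fderiv ℝ (p i) w (Pi.single k 1)) * (fderiv ℝ (p M) w (Pi.single k Complex.I)))
        = (if i = k then (-2)*(a M)*(a k)*(∏ l, w l).re else 0)
          + (if M = k then 2*(a i)*(a k)*(∏ l, w l).re else 0) := by
      intro k _
      rw [dsmall i hi k Complex.I, dsmall i hi k 1, dbig k 1, dbig k Complex.I]
      have hprodk : w k * ∏ l ∈ univ.erase k, w l = ∏ l, w l :=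
        Finset.mul_prod_erase univ w (mem_univ k)
      rw [← hprodk]
      by_cases h1 : i = k <;> by_cases h2 : M = k <;>
        simp [h1, h2, Complex.mul_re, Complex.mul_im] <;> ring
    rw [Finset.sum_congr rfl hterm, Finset.sum_add_distrib, Finset.sum_ite_eq,
      Finset.sum_ite_eq]
    simp
    ring
  by_cases hij : i = j
  · subst hij
    apply Finset.sum_eq_zero
    intro k _
    ring
  by_cases hi : i.val < m - 1 <;> by_cases hj : j.val < m - 1
  · apply Finset.sum_eq_zero
    intro k _
    rw [dsmall i hi k Complex.I, dsmall i hi k 1, dsmall j hj k Complex.I, dsmall j hj k 1]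
    by_cases h1 : i = k <;> by_cases h2 : M = k <;> by_cases h3 : j = k <;>
      simp [h1, h2, h3]
    all_goals first | ring1 | exact Or.inr (by ring)
  · have : j = M := Fin.ext (by simp [hM]; omega)
    rw [this]
    exact mixed i hi
  · have hiM : i = M := Fin.ext (by simp [hM]; omega)
    rw [hiM]
    have h0 := mixed j hj
    have hneg : ∑ k, a k *
        ((fderiv ℝ (p M) w (Pi.single k Complex.I)) * (fderiv ℝ (p j) w (Pi.single k 1))
          - (fderiv ℝ (p M) w (Pi.single k 1)) * (fderiv ℝ (p j) w (Pi.single k Complex.I)))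
        = -∑ k, a k *
        ((fderiv ℝ (p j) w (Pi.single k Complex.I)) * (fderiv ℝ (p M) w (Pi.single k 1))
          - (fderiv ℝ (p j) w (Pi.single k 1)) * (fderiv ℝ (p M) w (Pi.single k Complex.I))) := by
      rw [← Finset.sum_neg_distrib]
      exact Finset.sum_congr rfl fun k _ => by ring
    rw [hneg, h0, neg_zero]
  · exfalso
    have hi' : i = M := Fin.ext (by simp [hM]; omega)
    have hj' : j = M := Fin.ext (by simp [hM]; omega)
    exact hij (hi'.trans hj'.symm)
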